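/- arXiv:1702.07922 — 3 statements merged into one kernel-verified Lean document; each statement's English description precedes it below -/
import Mathlib

section
/- For every n ≥ 1, consider the word equation x_n a x_n b x_{n−1} b x_{n−2} ⋯ b x_1 = a x_n x_{n−1}² b x_{n−2}² b ⋯ b x_1² b a² over the constant alphabet {a,b} with distinct variables x_1,…,x_n. Its unique solution is the substitution h with h(x_i) = a^{2^i} for all 1 ≤ i ≤ n; consequently there exist constants c_1, c_2 > 0 (independent of n) such that the length of the minimal solution of this equation is at least c_1·2^n and at most c_2·2^n for all n ≥ 1. -/
/-!
STATEMENT 0: the regular-ordered-like equation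
  x_n a x_n b x_{n-1} b x_{n-2} ⋯ b x_1 = a x_n x_{n-1}² b x_{n-2}² b ⋯ b x_1² b a²
over Σ = {a, b} (modelled as `Bool`, with `a := false`, `b := true`) and variables
x_i modelled by natural numbers.  Its unique solution maps x_i to a^{2^i}, and
consequently the length of the minimal solution is Θ(2^n).
-/

namespace Stmt0

/-- Patterns: words over constants `Bool` (a = `false`, b = `true`) and variables `ℕ`. -/
abbrev Pattern := List (Bool ⊕ ℕ)

/-- Apply a substitution (a morphism acting as the identity on constants) to a pattern. -/
def applySub (h : ℕ → List Bool) : Pattern → List Bool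
  | [] => []
  | Sum.inl a :: rest => a :: applySub h rest
  | Sum.inr x :: rest => h x ++ applySub h rest

def A : Bool ⊕ ℕ := Sum.inl false   -- the letter a
def B : Bool ⊕ ℕ := Sum.inl true    -- the letter b
def X (i : ℕ) : Bool ⊕ ℕ := Sum.inr i  -- the variable x_i

/-- the part `b x_{n-1} b x_{n-2} ⋯ b x_1` (for the LHS). -/
def lhsTail : ℕ → Pattern
  | 0 => []
  | i + 1 => B :: X (i + 1) :: lhsTail i

/-- LHS: `x_n a x_n b x_{n-1} b x_{n-2} ⋯ b x_1`. -/
def lhs (n : ℕ) : Pattern := X n :: A :: X n :: lhsTail (n - 1)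

/-- the part `x_{n-1}² b x_{n-2}² b ⋯ b x_1² b` read as `(x_{n-1} x_{n-1} b) ⋯ (x_1 x_1 b)`. -/
def rhsTail : ℕ → Pattern
  | 0 => []
  | i + 1 => X (i + 1) :: X (i + 1) :: B :: rhsTail i

/-- RHS: `a x_n x_{n-1}² b x_{n-2}² b ⋯ b x_1² b a²`. -/
def rhs (n : ℕ) : Pattern := A :: X n :: (rhsTail (n - 1) ++ [A, A])

end Stmt0

namespace Stmt0Aux
open Stmt0

lemma applySub_append (h : ℕ → List Bool) (p q : Pattern) :
    applySub h (p ++ q) = applySub h p ++ applySub h q := by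
  induction p with
  | nil => rfl
  | cons x p ih => cases x <;> simp [applySub, ih]

lemma eq_replicate_of_concat (c : Bool) : ∀ w : List Bool, w ++ [c] = c :: w →
    w = List.replicate w.length c := by
  intro w
  induction w with
  | nil => intro _; rfl
  | cons x w ih =>
    intro hw
    rw [List.cons_append] at hw
    injection hw with h1 h2
    subst h1
    rw [List.length_cons, List.replicate_succ]
    exact congrArg (x :: ·) (ih h2)

lemma first_true : ∀ k j (u v : List Bool),
    List.replicate k false ++ true :: u = List.replicate j false ++ true :: v →
    k = j ∧ u = v := by
  intro k
  induction k with
  | zero =>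
    intro j u v h
    cases j with
    | zero => simpa using h
    | succ j => simp [List.replicate_succ] at h
  | succ k ih =>
    intro j u v h
    cases j with
    | zero => simp [List.replicate_succ] at h
    | succ j =>
      rw [List.replicate_succ, List.replicate_succ, List.cons_append, List.cons_append] at h
      injection h with _ h2
      obtain ⟨h1, h2⟩ := ih j u v h2
      exact ⟨by omega, h2⟩

lemma rep_cons (k : ℕ) (c : Bool) (t : List Bool) :
    List.replicate k c ++ c :: t = c :: (List.replicate k c ++ t) := by
  rw [← List.singleton_append, ← List.append_assoc, ← List.replicate_succ',
    List.replicate_succ, List.cons_append]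

lemma count_lhsTail (h : ℕ → List Bool) : ∀ m,
    (applySub h (lhsTail m)).count true =
      m + ∑ i ∈ Finset.Icc 1 m, (h i).count true := by
  intro m
  induction m with
  | zero => simp [lhsTail, applySub]
  | succ m ih =>
    rw [lhsTail]
    simp only [applySub, B, X, List.count_cons, List.count_append, ih,
      Finset.sum_Icc_succ_top (Nat.le_add_left 1 m)]
    simp
    omega

lemma count_rhsTail (h : ℕ → List Bool) : ∀ m,
    (applySub h (rhsTail m)).count true =
      m + 2 * ∑ i ∈ Finset.Icc 1 m, (h i).count true := by
  intro m
  induction m with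
  | zero => simp [rhsTail, applySub]
  | succ m ih =>
    rw [rhsTail]
    simp only [applySub, B, X, List.count_cons, List.count_append, ih,
      Finset.sum_Icc_succ_top (Nat.le_add_left 1 m)]
    simp
    omega

lemma all_false_of_count (l : List Bool) (hl : l.count true = 0) :
    l = List.replicate l.length false := by
  rw [List.eq_replicate_length]
  intro b hb
  cases b with
  | false => rfl
  | true => exact absurd (List.count_pos_iff.mpr hb) (by omega)


lemma comb (s : ℕ) (R t : List Bool) :
    List.replicate s false ++ (List.replicate s false ++ true :: R) ++ t
      = List.replicate (s + s) false ++ true :: (R ++ t) := by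
  rw [List.replicate_add]
  simp only [List.append_assoc, List.cons_append]

lemma core_fwd : ∀ m (h : ℕ → List Bool) k,
    (∀ i, 1 ≤ i → i ≤ m → h i = List.replicate (h i).length false) →
    List.replicate k false ++ applySub h (lhsTail m)
      = applySub h (rhsTail m) ++ [false, false] →
    k = 2 ^ (m + 1) ∧ ∀ i, 1 ≤ i → i ≤ m → h i = List.replicate (2 ^ i) false := by
  intro m
  induction m with
  | zero =>
    intro h k _ heq
    simp only [lhsTail, rhsTail, applySub, List.append_nil, List.nil_append] at heq
    refine ⟨?_, fun i h1 h2 => by omega⟩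
    have := congrArg List.length heq
    simpa using this
  | succ m ih =>
    intro h k hall heq
    have hm1 : h (m+1) = List.replicate (h (m+1)).length false :=
      hall (m+1) (by omega) (by omega)
    set s := (h (m+1)).length with hs
    rw [lhsTail, rhsTail] at heq
    simp only [applySub, B, X] at heq
    rw [hm1] at heq
    rw [comb] at heq
    obtain ⟨hk, hrest⟩ := first_true _ _ _ _ heq
    obtain ⟨hsval, hind⟩ := ih h s (fun i h1 h2 => hall i h1 (by omega)) hrest
    constructor
    · rw [hk, hsval, ← mul_two, ← pow_succ]
    · intro i h1 h2
      rcases Nat.lt_or_ge i (m+1) with hlt | hge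
      · exact hind i h1 (by omega)
      · have : i = m + 1 := by omega
        subst this
        rw [hm1, hsval]
    
lemma core_bwd : ∀ m (h : ℕ → List Bool),
    (∀ i, 1 ≤ i → i ≤ m → h i = List.replicate (2 ^ i) false) →
    List.replicate (2 ^ (m+1)) false ++ applySub h (lhsTail m)
      = applySub h (rhsTail m) ++ [false, false] := by
  intro m
  induction m with
  | zero =>
    intro h _
    simp [lhsTail, rhsTail, applySub]
  | succ m ih =>
    intro h hall
    have hm1 : h (m+1) = List.replicate (2 ^ (m+1)) false :=
      hall (m+1) (by omega) (by omega)
    have ihh := ih h (fun i h1 h2 => hall i h1 (by omega))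
    rw [lhsTail, rhsTail]
    simp only [applySub, B, X]
    rw [hm1]
    have hp : (2:ℕ) ^ (m + 1 + 1) = 2 ^ (m+1) + 2 ^ (m+1) := by rw [pow_succ, mul_two]
    rw [comb, ← ihh, hp]

lemma len_lhsTail (h : ℕ → List Bool) : ∀ m,
    (∀ i, 1 ≤ i → i ≤ m → h i = List.replicate (2 ^ i) false) →
    (applySub h (lhsTail m)).length + 2 = m + 2 ^ (m+1) := by
  intro m
  induction m with
  | zero => intro _; simp [lhsTail, applySub]
  | succ m ih =>
    intro hall
    have hm1 : h (m+1) = List.replicate (2 ^ (m+1)) false :=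
      hall (m+1) (by omega) (by omega)
    have ihh := ih (fun i h1 h2 => hall i h1 (by omega))
    rw [lhsTail]
    simp only [applySub, B, X, List.length_cons, List.length_append, hm1,
      List.length_replicate]
    have : 2 ^ (m+2) = 2 ^ (m+1) + 2 ^ (m+1) := by rw [pow_succ]; ring
    omega

lemma main_iff (n : ℕ) (hn : 1 ≤ n) (h : ℕ → List Bool) :
    applySub h (lhs n) = applySub h (rhs n) ↔
      ∀ i, 1 ≤ i → i ≤ n → h i = List.replicate (2 ^ i) false := by
  obtain ⟨m, rfl⟩ : ∃ m, n = m + 1 := ⟨n - 1, by omega⟩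
  have hsub : m + 1 - 1 = m := rfl
  constructor
  · intro heq
    rw [lhs, rhs, hsub] at heq
    simp only [applySub, applySub_append, A, X] at heq
    have heq' : (h (m+1) ++ [false]) ++ (h (m+1) ++ applySub h (lhsTail m))
        = ([false] ++ h (m+1)) ++ (applySub h (rhsTail m) ++ [false, false]) := by
      simpa [List.append_assoc, applySub] using heq
    obtain ⟨e1, e2⟩ := List.append_inj heq' (by simp)
    have hrep : h (m+1) = List.replicate (h (m+1)).length false :=
      eq_replicate_of_concat false _ (by simpa using e1)
    set k := (h (m+1)).length with hk
    rw [hrep] at e2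
    -- count argument
    have hcnt := congrArg (List.count true) e2
    rw [List.count_append, List.count_append, count_lhsTail, count_rhsTail] at hcnt
    simp [List.count_replicate] at hcnt
    have hzero : ∀ i ∈ Finset.Icc 1 m, (h i).count true = 0 := by
      intro i hi
      have hsum : ∑ i ∈ Finset.Icc 1 m, (h i).count true = 0 := by omega
      exact (Finset.sum_eq_zero_iff).mp hsum i hi
    have hall : ∀ i, 1 ≤ i → i ≤ m → h i = List.replicate (h i).length false := by
      intro i h1 h2
      exact all_false_of_count _ (hzero i (Finset.mem_Icc.mpr ⟨h1, h2⟩))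
    obtain ⟨hkval, hind⟩ := core_fwd m h k hall e2
    intro i h1 h2
    rcases Nat.lt_or_ge i (m+1) with hlt | hge
    · exact hind i h1 (by omega)
    · have : i = m + 1 := by omega
      subst this
      rw [hrep, hkval]
  · intro hsol
    have hm1 : h (m+1) = List.replicate (2 ^ (m+1)) false :=
      hsol (m+1) (by omega) (by omega)
    have e2 := core_bwd m h (fun i h1 h2 => hsol i h1 (by omega))
    rw [lhs, rhs, hsub]
    simp only [applySub, applySub_append, A, X]
    rw [hm1, ← e2, rep_cons]

end Stmt0Aux

open Stmt0 in
theorem stmt0 :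
    (∀ n : ℕ, 1 ≤ n → ∀ h : ℕ → List Bool,
      (applySub h (lhs n) = applySub h (rhs n) ↔
        ∀ i : ℕ, 1 ≤ i → i ≤ n → h i = List.replicate (2 ^ i) false)) ∧
    (∃ c₁ c₂ : ℝ, 0 < c₁ ∧ 0 < c₂ ∧
      ∀ n : ℕ, 1 ≤ n → ∀ h : ℕ → List Bool,
        applySub h (lhs n) = applySub h (rhs n) →
        (∀ g : ℕ → List Bool, applySub g (lhs n) = applySub g (rhs n) →
          (applySub h (lhs n)).length ≤ (applySub g (lhs n)).length) →
        c₁ * 2 ^ n ≤ ((applySub h (lhs n)).length : ℝ) ∧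
          ((applySub h (lhs n)).length : ℝ) ≤ c₂ * 2 ^ n) := by
  open Stmt0Aux in
  constructor
  · exact fun n hn h => main_iff n hn h
  · refine ⟨1, 4, one_pos, by norm_num, ?_⟩
    intro n hn h heq _
    have hsol := (main_iff n hn h).mp heq
    obtain ⟨m, rfl⟩ : ∃ m, n = m + 1 := ⟨n - 1, by omega⟩
    have hm1 : h (m+1) = List.replicate (2 ^ (m+1)) false :=
      hsol (m+1) (by omega) (by omega)
    have htail := len_lhsTail h m (fun i h1 h2 => hsol i h1 (by omega))
    have hlen : (applySub h (lhs (m+1))).length + 2 = 3 * 2 ^ (m+1) + (m+1) := by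
      rw [lhs]
      simp only [applySub, A, X, List.length_cons, List.length_append, hm1,
        List.length_replicate, Nat.add_sub_cancel]
      omega
    have hK : 2 ≤ 2 ^ (m+1) := by
      calc 2 = 2 ^ 1 := rfl
      _ ≤ 2 ^ (m+1) := Nat.pow_le_pow_right (by omega) (by omega)
    have hn2 : m + 1 ≤ 2 ^ (m+1) := Nat.le_of_lt (Nat.lt_two_pow_self (n := m+1))
    have hlow : 2 ^ (m+1) ≤ (applySub h (lhs (m+1))).length := by omega
    have hhigh : (applySub h (lhs (m+1))).length ≤ 4 * 2 ^ (m+1) := by omega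
    constructor
    · rw [one_mul]
      exact_mod_cast hlow
    · exact_mod_cast hhigh
end

section
/- Let E: α = β be a regular-ordered word equation of length n = |αβ|, and let h be a minimal solution to E. Then |h(x)| < n for every variable x occurring in E. -/
/-!
STATEMENT 9: if h is a minimal solution of a regular-ordered word equation
E : α = β of length n = |αβ|, then |h(x)| < n for every variable x occurring in E.
-/

namespace WEq

variable {C V : Type}

/-- Apply a substitution (identity on constants) to a pattern. -/
def applySub (h : V → List C) : List (C ⊕ V) → List C
  | [] => []
  | Sum.inl a :: rest => a :: applySub h rest
  | Sum.inr x :: rest => h x ++ applySub h rest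

/-- Regular equation: each variable occurs at most once in each side. -/
def Regular [DecidableEq C] [DecidableEq V] (α β : List (C ⊕ V)) : Prop :=
  ∀ x : V, α.count (Sum.inr x) ≤ 1 ∧ β.count (Sum.inr x) ≤ 1

/-- Regular-ordered equation: regular, and any two variables occurring on both
sides occur in the same relative order in α as in β. -/
def RegularOrdered [DecidableEq C] [DecidableEq V] (α β : List (C ⊕ V)) : Prop :=
  Regular α β ∧
  ∀ x y : V, Sum.inr x ∈ α → Sum.inr x ∈ β → Sum.inr y ∈ α → Sum.inr y ∈ β →
    (α.idxOf (Sum.inr x) < α.idxOf (Sum.inr y) ↔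
      β.idxOf (Sum.inr x) < β.idxOf (Sum.inr y))

end WEq

namespace S9
open WEq

variable {C V : Type} [DecidableEq C] [DecidableEq V]

set_option linter.unusedSectionVars false

instance : LawfulBEq (C ⊕ V) where
  eq_of_beq {a b} h := by
    cases a <;> cases b
    · exact congrArg Sum.inl (eq_of_beq h)
    · exact Bool.noConfusion h
    · exact Bool.noConfusion h
    · exact congrArg Sum.inr (eq_of_beq h)
  rfl {a} := by
    cases a with
    | inl v => exact beq_self_eq_true v
    | inr v => exact beq_self_eq_true v

/-- image of a single symbol -/
def img (h : V → List C) : (C ⊕ V) → List C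
  | Sum.inl a => [a]
  | Sum.inr x => h x

@[simp] lemma applySub_nil (h : V → List C) : applySub h ([] : List (C⊕V)) = [] := rfl

lemma applySub_cons (h : V → List C) (s : C ⊕ V) (σ : List (C⊕V)) :
    applySub h (s :: σ) = img h s ++ applySub h σ := by
  cases s <;> rfl

lemma applySub_append (h : V → List C) (σ τ : List (C⊕V)) :
    applySub h (σ ++ τ) = applySub h σ ++ applySub h τ := by
  induction σ with
  | nil => rfl
  | cons s σ ih => rw [List.cons_append, applySub_cons, applySub_cons, ih, List.append_assoc]

lemma applySub_update_not_mem (h : V → List C) (z : V) (w : List C) (σ : List (C⊕V))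
    (hz : Sum.inr z ∉ σ) : applySub (Function.update h z w) σ = applySub h σ := by
  induction σ with
  | nil => rfl
  | cons s σ ih =>
    rw [applySub_cons, applySub_cons, ih (fun hh => hz (List.mem_cons_of_mem _ hh))]
    congr 1
    cases s with
    | inl a => rfl
    | inr x =>
      have : x ≠ z := by rintro rfl; exact hz (List.mem_cons_self)
      simp [img, Function.update_of_ne this]

lemma img_update_self (h : V → List C) (z : V) (w : List C) :
    img (Function.update h z w) (Sum.inr z) = w := by simp [img]

/-- the symbol occurrence covering position `p` of `applySub h σ`, with its offset. -/
def cover (h : V → List C) : List (C ⊕ V) → ℕ → Option ((C ⊕ V) × ℕ)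
  | [], _ => none
  | s :: σ, p => if p < (img h s).length then some (s, p) else cover h σ (p - (img h s).length)

lemma cover_cons_lt (h : V → List C) {s : C⊕V} {σ : List (C⊕V)} {p : ℕ}
    (hp : p < (img h s).length) : cover h (s :: σ) p = some (s, p) := by
  simp [cover, hp]

lemma cover_cons_ge (h : V → List C) {s : C⊕V} {σ : List (C⊕V)} {p : ℕ}
    (hp : (img h s).length ≤ p) : cover h (s :: σ) p = cover h σ (p - (img h s).length) := by
  simp [cover, Nat.not_lt.2 hp]

lemma cover_cons_add (h : V → List C) (s : C⊕V) (σ : List (C⊕V)) (p : ℕ) :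
    cover h (s :: σ) ((img h s).length + p) = cover h σ p := by
  simp [cover]

lemma cover_append_add (h : V → List C) (μ σ : List (C⊕V)) (p : ℕ) :
    cover h (μ ++ σ) ((applySub h μ).length + p) = cover h σ p := by
  induction μ with
  | nil => simp
  | cons s μ ih =>
    rw [List.cons_append, applySub_cons, List.length_append, Nat.add_assoc, cover_cons_add, ih]

lemma cover_eq_some_of_lt (h : V → List C) (σ : List (C⊕V)) (p : ℕ)
    (hp : p < (applySub h σ).length) : ∃ s r, cover h σ p = some (s, r) ∧ r < (img h s).length := by
  induction σ generalizing p with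
  | nil => simp at hp
  | cons s σ ih =>
    by_cases hlt : p < (img h s).length
    · exact ⟨s, p, cover_cons_lt h hlt, hlt⟩
    · push_neg at hlt
      rw [applySub_cons, List.length_append] at hp
      obtain ⟨s', r, hc, hr⟩ := ih (p := p - (img h s).length) (by omega)
      refine ⟨s', r, ?_, hr⟩
      rw [cover_cons_ge h hlt]
      exact hc

lemma cover_split (h : V → List C) {σ : List (C⊕V)} {p : ℕ} {s : C⊕V} {r : ℕ}
    (hc : cover h σ p = some (s, r)) :
    ∃ μ ν, σ = μ ++ s :: ν ∧ p = (applySub h μ).length + r ∧ r < (img h s).length := by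
  induction σ generalizing p with
  | nil => simp [cover] at hc
  | cons s₀ σ ih =>
    by_cases hlt : p < (img h s₀).length
    · rw [cover_cons_lt h hlt] at hc
      obtain ⟨rfl, rfl⟩ : s₀ = s ∧ p = r := by
        constructor <;> [exact congrArg (·.1) (Option.some.inj hc);
          exact congrArg (·.2) (Option.some.inj hc)]
      exact ⟨[], σ, rfl, by simp, hlt⟩
    · push_neg at hlt
      rw [cover_cons_ge h hlt] at hc
      obtain ⟨μ, ν, rfl, hp, hr⟩ := ih hc
      exact ⟨s₀ :: μ, ν, rfl, by
        rw [applySub_cons, List.length_append]; omega, hr⟩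

/-! ### unique occurrence positions -/

def posIn (h : V → List C) (σ : List (C⊕V)) (z : V) : ℕ :=
  (applySub h (σ.take (σ.idxOf (Sum.inr z)))).length

lemma indexOf_append_cons {A : Type} [BEq A] [LawfulBEq A] (μ ν : List A) (a : A) (ha : a ∉ μ) :
    (μ ++ a :: ν).idxOf a = μ.length := by
  induction μ with
  | nil => simp [List.idxOf_cons]
  | cons b μ ih =>
    have hb : b ≠ a := by rintro rfl; exact ha (List.mem_cons_self)
    rw [List.cons_append, List.idxOf_cons, beq_false_of_ne hb]
    rw [ih (fun hh => ha (List.mem_cons_of_mem _ hh))]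
    rfl

lemma not_mem_of_count_le_one {A : Type} [BEq A] [LawfulBEq A] {σ μ ν : List A} {e : A}
    (hσ : σ = μ ++ e :: ν) (hc : σ.count e ≤ 1) : e ∉ μ ∧ e ∉ ν := by
  subst hσ
  rw [List.count_append, List.count_cons_self] at hc
  constructor <;> intro hm
  · have := List.count_pos_iff.2 hm; omega
  · have := List.count_pos_iff.2 hm; omega

lemma posIn_eq_of_split {h : V → List C} {σ μ ν : List (C⊕V)} {z : V}
    (hσ : σ = μ ++ Sum.inr z :: ν) (hc : σ.count (Sum.inr z) ≤ 1) :
    posIn h σ z = (applySub h μ).length := by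
  have hμ := (not_mem_of_count_le_one hσ hc).1
  subst hσ
  rw [posIn, indexOf_append_cons _ _ _ hμ, List.take_left]

lemma exists_split_posIn (h : V → List C) {σ : List (C⊕V)} {z : V}
    (hm : Sum.inr z ∈ σ) (hc : σ.count (Sum.inr z) ≤ 1) :
    ∃ μ ν, σ = μ ++ Sum.inr z :: ν ∧ Sum.inr z ∉ μ ∧ Sum.inr z ∉ ν ∧
      (applySub h μ).length = posIn h σ z := by
  obtain ⟨μ, ν, rfl⟩ := List.append_of_mem hm
  obtain ⟨h1, h2⟩ := not_mem_of_count_le_one rfl hc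
  exact ⟨μ, ν, rfl, h1, h2, (posIn_eq_of_split rfl hc).symm⟩

lemma cover_at_posIn (h : V → List C) {σ : List (C⊕V)} {z : V} {r : ℕ}
    (hm : Sum.inr z ∈ σ) (hc : σ.count (Sum.inr z) ≤ 1) (hr : r < (h z).length) :
    cover h σ (posIn h σ z + r) = some (Sum.inr z, r) := by
  obtain ⟨μ, ν, rfl, -, -, hpos⟩ := exists_split_posIn h hm hc
  rw [← hpos, cover_append_add, cover_cons_lt]
  exact hr

lemma cover_var_posIn {h : V → List C} {σ : List (C⊕V)} {z : V} {p r : ℕ}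
    (hc : σ.count (Sum.inr z) ≤ 1) (hcov : cover h σ p = some (Sum.inr z, r)) :
    p = posIn h σ z + r ∧ Sum.inr z ∈ σ ∧ r < (h z).length := by
  obtain ⟨μ, ν, hσ, hp, hr⟩ := cover_split h hcov
  refine ⟨?_, by rw [hσ]; simp, hr⟩
  rw [posIn_eq_of_split hσ hc]; omega

lemma posIn_add_lt (h : V → List C) {σ : List (C⊕V)} {z : V} {r : ℕ}
    (hm : Sum.inr z ∈ σ) (hc : σ.count (Sum.inr z) ≤ 1) (hr : r < (h z).length) :
    posIn h σ z + r < (applySub h σ).length := by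
  obtain ⟨μ, ν, rfl, -, -, hpos⟩ := exists_split_posIn h hm hc
  rw [← hpos, applySub_append, applySub_cons]
  simp only [List.length_append]
  have : (img h (Sum.inr z)).length = (h z).length := rfl
  omega

/-! ### keep (masked filtering) -/

def keep (S : ℕ → Bool) : List C → List C
  | [] => []
  | a :: w => (if S 0 then [a] else []) ++ keep (fun i => S (i+1)) w

lemma keep_congrOn {S T : ℕ → Bool} {w : List C} (hST : ∀ i < w.length, S i = T i) :
    keep S w = keep T w := by
  induction w generalizing S T with
  | nil => rfl
  | cons a w ih =>
    rw [keep, keep, hST 0 (by simp), ih (fun i hi => hST (i+1) (by simpa using hi))]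

lemma keep_all {S : ℕ → Bool} {w : List C} (hS : ∀ i < w.length, S i = true) :
    keep S w = w := by
  induction w generalizing S with
  | nil => rfl
  | cons a w ih =>
    rw [keep, hS 0 (by simp), ih (fun i hi => hS (i+1) (by simpa using hi))]
    simp

lemma keep_length_le (S : ℕ → Bool) (w : List C) : (keep S w).length ≤ w.length := by
  induction w generalizing S with
  | nil => simp [keep]
  | cons a w ih =>
    rw [keep, List.length_append]
    have := ih (S := fun i => S (i+1))
    by_cases h0 : S 0 <;> simp [h0] <;> omega

lemma keep_length_lt {S : ℕ → Bool} {w : List C} {j : ℕ} (hj : j < w.length)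
    (hSj : S j = false) : (keep S w).length < w.length := by
  induction w generalizing S j with
  | nil => simp at hj
  | cons a w ih =>
    rw [keep, List.length_append]
    cases j with
    | zero =>
      have := keep_length_le (fun i => S (i+1)) w
      rw [hSj]
      simp only [if_neg Bool.false_ne_true, List.length_nil, List.length_cons]
      omega
    | succ j =>
      have := ih (S := fun i => S (i+1)) (by simpa using hj) hSj
      by_cases h0 : S 0 <;> simp [h0] <;> omega

lemma keep_append (S : ℕ → Bool) (u v : List C) :
    keep S (u ++ v) = keep S u ++ keep (fun i => S (i + u.length)) v := by
  induction u generalizing S with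
  | nil => simp [keep]
  | cons a u ih =>
    have hmask : keep (fun i => (fun j => S (j+1)) (i + u.length)) v
        = keep (fun i => S (i + (a :: u).length)) v := by
      apply keep_congrOn
      intro i _
      exact congrArg S (by simp [List.length_cons]; omega)
    rw [List.cons_append, keep, keep, ih, List.append_assoc, hmask]

/-! ### counting positions by covering symbol class -/

def cnt (h : V → List C) (σ : List (C⊕V)) (Q : (C⊕V) → Bool) : ℕ :=
  (List.range (applySub h σ).length).countP (fun p =>
    match cover h σ p with
    | some (s, _) => Q s
    | none => false)

lemma cnt_eq_sum (h : V → List C) (σ : List (C⊕V)) (Q : (C⊕V) → Bool) :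
    cnt h σ Q = (σ.map (fun s => if Q s then (img h s).length else 0)).sum := by
  induction σ with
  | nil => simp [cnt]
  | cons s σ ih =>
    rw [cnt, applySub_cons, List.length_append, List.range_add, List.countP_append,
      List.countP_map]
    have h1 : (List.range (img h s).length).countP (fun p =>
        match cover h (s :: σ) p with
        | some (s', _) => Q s'
        | none => false) = if Q s then (img h s).length else 0 := by
      have hcg : ∀ p ∈ List.range (img h s).length, ((fun p =>
          match cover h (s :: σ) p with
          | some (s', _) => Q s'
          | none => false) p = true ↔ (fun _ => Q s) p = true) := by
        intro p hp
        rw [List.mem_range] at hp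
        simp [cover_cons_lt h hp]
      rw [List.countP_congr hcg]
      by_cases hq : Q s <;> simp [hq, List.countP_true, List.countP_false]
    have h2 : (List.range (applySub h σ).length).countP ((fun p =>
        match cover h (s :: σ) p with
        | some (s', _) => Q s'
        | none => false) ∘ (fun x => (img h s).length + x)) = cnt h σ Q := by
      rw [cnt]
      apply List.countP_congr
      intro p _
      simp only [Function.comp_apply, cover_cons_add]
    rw [h1, h2, ih, List.map_cons, List.sum_cons]

/-! ### deletion masks -/

lemma cover_pos_lt {h : V → List C} {σ : List (C⊕V)} {p : ℕ} {s : C⊕V} {r : ℕ}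
    (hc : cover h σ p = some (s, r)) : p < (applySub h σ).length := by
  obtain ⟨μ, ν, rfl, hp, hr⟩ := cover_split h hc
  rw [applySub_append, applySub_cons]
  simp only [List.length_append]
  omega

lemma applySub_keep {h g : V → List C} (D : V → ℕ → Bool) (O : ℕ → Bool)
    (σ : List (C⊕V))
    (hgz : ∀ z, Sum.inr z ∈ σ → g z = keep (fun r => !(D z r)) (h z)) :
    ∀ t, (∀ p, p < (applySub h σ).length →
      (∀ a r, cover h σ p = some (Sum.inl a, r) → O (t + p) = false) ∧
      (∀ z r, cover h σ p = some (Sum.inr z, r) → O (t + p) = D z r)) →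
    applySub g σ = keep (fun i => !(O (t + i))) (applySub h σ) := by
  induction σ with
  | nil => intro t _; rfl
  | cons s σ ih =>
    intro t Hyp
    rw [applySub_cons, applySub_cons, keep_append]
    have hlen : ∀ p : ℕ, p < (img h s).length → p < (applySub h (s :: σ)).length := by
      intro p hp
      rw [applySub_cons, List.length_append]; omega
    have htail : applySub g σ = keep (fun i => !(O ((t + (img h s).length) + i))) (applySub h σ) := by
      apply ih (fun z hz => hgz z (List.mem_cons_of_mem _ hz))
      intro p hp
      have hp' : (img h s).length + p < (applySub h (s :: σ)).length := by
        rw [applySub_cons, List.length_append]; omega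
      constructor
      · intro a r hcov
        have := (Hyp ((img h s).length + p) hp').1 a r (by rw [cover_cons_add]; exact hcov)
        rw [← this]; congr 1; omega
      · intro z r hcov
        have := (Hyp ((img h s).length + p) hp').2 z r (by rw [cover_cons_add]; exact hcov)
        rw [← this]; congr 1; omega
    have hshift : keep (fun i => !(O ((t + (img h s).length) + i))) (applySub h σ)
        = keep (fun i => !(O (t + (i + (img h s).length)))) (applySub h σ) := by
      apply keep_congrOn; intro i _
      congr 2
      omega
    rw [htail, hshift]
    congr 1
    -- head part
    cases s with
    | inl a =>
      have h0 : O (t + 0) = false :=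
        (Hyp 0 (hlen 0 (by simp [img]))).1 a 0 (cover_cons_lt h (by simp [img]))
      show [a] = keep (fun i => !(O (t+i))) [a]
      rw [keep, h0]
      simp [keep]
    | inr z =>
      have hgz' := hgz z (List.mem_cons_self)
      show g z = keep (fun i => !(O (t+i))) (h z)
      rw [hgz']
      apply keep_congrOn
      intro r hr
      have := (Hyp r (hlen r hr)).2 z r (cover_cons_lt h (by simpa [img] using hr))
      rw [this]

lemma no_good_mask {h : V → List C} {α β : List (C⊕V)}
    (hcα : ∀ z : V, α.count (Sum.inr z) ≤ 1) (hcβ : ∀ z : V, β.count (Sum.inr z) ≤ 1)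
    (hsol : applySub h α = applySub h β)
    (hmin : ∀ g : V → List C, applySub g α = applySub g β →
      (applySub h α).length ≤ (applySub g α).length)
    (O : ℕ → Bool)
    (HA : ∀ p, O p = true → ∃ z r, cover h α p = some (Sum.inr z, r))
    (HB : ∀ p, O p = true → ∃ z r, cover h β p = some (Sum.inr z, r))
    (HC : ∀ z r, Sum.inr z ∈ α → Sum.inr z ∈ β → r < (h z).length →
       O (posIn h α z + r) = O (posIn h β z + r))
    (HNE : ∃ p, O p = true) : False := by
  classical
  set D : V → ℕ → Bool := fun z r =>
    if Sum.inr z ∈ α then O (posIn h α z + r) else O (posIn h β z + r) with hD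
  set g : V → List C := fun z => keep (fun r => !(D z r)) (h z) with hg
  have hα : applySub g α = keep (fun i => !(O (0 + i))) (applySub h α) := by
    apply applySub_keep D O α (fun z _ => rfl)
    intro p hp
    constructor
    · intro a r hcov
      cases hOp : O p with
      | false => rw [Nat.zero_add]; exact hOp
      | true =>
        obtain ⟨z', r', hcov'⟩ := HA p hOp
        rw [hcov] at hcov'
        simp at hcov'
    · intro z r hcov
      obtain ⟨hpeq, hmem, hlt⟩ := cover_var_posIn (hcα z) hcov
      rw [hD]
      simp only [if_pos hmem]
      rw [Nat.zero_add, hpeq]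
  have hβ : applySub g β = keep (fun i => !(O (0 + i))) (applySub h β) := by
    apply applySub_keep D O β (fun z _ => rfl)
    intro p hp
    constructor
    · intro a r hcov
      cases hOp : O p with
      | false => rw [Nat.zero_add]; exact hOp
      | true =>
        obtain ⟨z', r', hcov'⟩ := HB p hOp
        rw [hcov] at hcov'
        simp at hcov'
    · intro z r hcov
      obtain ⟨hpeq, hmem, hlt⟩ := cover_var_posIn (hcβ z) hcov
      rw [hD]
      by_cases hma : Sum.inr z ∈ α
      · simp only [if_pos hma]
        rw [Nat.zero_add, hpeq, HC z r hma hmem hlt]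
      · simp only [if_neg hma]
        rw [Nat.zero_add, hpeq]
  have hsolg : applySub g α = applySub g β := by rw [hα, hβ, hsol]
  have hle := hmin g hsolg
  obtain ⟨p₀, hp₀⟩ := HNE
  obtain ⟨z₀, r₀, hcov₀⟩ := HA p₀ hp₀
  have hp₀lt : p₀ < (applySub h α).length := cover_pos_lt hcov₀
  have hltlen : (applySub g α).length < (applySub h α).length := by
    rw [hα]
    apply keep_length_lt hp₀lt
    rw [Nat.zero_add, hp₀]
    rfl
  omega

/-! ### the transfer walk -/

/-- One backward step: if position `p` (of the common solution word) is covered on the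
`β` side by a variable that also occurs in `α`, move to the corresponding position of its
`α`-occurrence. -/
def stepB (h : V → List C) (α β : List (C⊕V)) (p : ℕ) : Option ℕ :=
  match cover h β p with
  | some (Sum.inr z, r) => if Sum.inr z ∈ α then some (posIn h α z + r) else none
  | _ => none

def iterB (h : V → List C) (α β : List (C⊕V)) (p : ℕ) : ℕ → Option ℕ
  | 0 => some p
  | n+1 => (iterB h α β p n).bind (stepB h α β)

lemma stepB_eq_some {h : V → List C} {α β : List (C⊕V)} {p q : ℕ}
    (hs : stepB h α β p = some q) :
    ∃ z r, cover h β p = some (Sum.inr z, r) ∧ Sum.inr z ∈ α ∧ q = posIn h α z + r := by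
  unfold stepB at hs
  rcases hcov : cover h β p with _ | ⟨s, r⟩
  · rw [hcov] at hs; exact absurd hs (by simp)
  · rcases s with a | z
    · rw [hcov] at hs
      exact absurd hs (by simp)
    · rw [hcov] at hs
      have hs' : (if Sum.inr z ∈ α then some (posIn h α z + r) else none) = some q := hs
      by_cases hm : Sum.inr z ∈ α
      · rw [if_pos hm] at hs'
        exact ⟨z, r, rfl, hm, (Option.some.inj hs').symm⟩
      · rw [if_neg hm] at hs'; exact absurd hs' (by simp)

lemma stepB_inv {h : V → List C} {α β : List (C⊕V)}
    (hcα : ∀ z : V, α.count (Sum.inr z) ≤ 1) (hcβ : ∀ z : V, β.count (Sum.inr z) ≤ 1)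
    {p q : ℕ} (hs : stepB h α β p = some q) : stepB h β α q = some p := by
  obtain ⟨z, r, hcov, hm, rfl⟩ := stepB_eq_some hs
  obtain ⟨hpeq, hmemβ, hlt⟩ := cover_var_posIn (hcβ z) hcov
  unfold stepB
  rw [cover_at_posIn h hm (hcα z) hlt]
  show (if Sum.inr z ∈ β then some (posIn h β z + r) else none) = some p
  rw [if_pos hmemβ, hpeq]

lemma stepB_lt {h : V → List C} {α β : List (C⊕V)}
    (hcα : ∀ z : V, α.count (Sum.inr z) ≤ 1)
    {p q : ℕ} (hs : stepB h α β p = some q) : q < (applySub h α).length := by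
  obtain ⟨z, r, hcov, hm, rfl⟩ := stepB_eq_some hs
  obtain ⟨μ, ν, hβ, hp, hr⟩ := cover_split h hcov
  exact posIn_add_lt h hm (hcα z) (by simpa [img] using hr)

lemma iterB_succ_some {h : V → List C} {α β : List (C⊕V)} {p : ℕ} {n : ℕ} {b : ℕ}
    (hs : iterB h α β p (n+1) = some b) :
    ∃ a, iterB h α β p n = some a ∧ stepB h α β a = some b := by
  unfold iterB at hs
  rcases ha : iterB h α β p n with _ | a
  · rw [ha] at hs; exact absurd hs (by simp)
  · rw [ha] at hs; exact ⟨a, rfl, hs⟩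

lemma iterB_isSome_step {h : V → List C} {α β : List (C⊕V)} {p : ℕ} {j : ℕ}
    (hj : (iterB h α β p (j+1)).isSome) : (iterB h α β p j).isSome := by
  obtain ⟨b, hb⟩ := Option.isSome_iff_exists.1 hj
  obtain ⟨a, ha, -⟩ := iterB_succ_some hb
  rw [ha]; rfl

lemma iterB_isSome_of_le {h : V → List C} {α β : List (C⊕V)} {p : ℕ} {i j : ℕ}
    (hij : i ≤ j) (hj : (iterB h α β p j).isSome) : (iterB h α β p i).isSome := by
  induction j with
  | zero => obtain rfl : i = 0 := Nat.le_zero.1 hij; exact hj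
  | succ j ih =>
    rcases Nat.lt_succ_iff_lt_or_eq.1 (Nat.lt_succ_of_le hij) with hlt | rfl
    · exact ih (by omega) (iterB_isSome_step hj)
    · exact hj

/-- the chain value function -/
noncomputable def qfn (h : V → List C) (α β : List (C⊕V)) (p : ℕ) (t : ℕ) : ℕ :=
  (iterB h α β p t).getD 0

lemma qfn_zero (h : V → List C) (α β : List (C⊕V)) (p : ℕ) : qfn h α β p 0 = p := rfl

lemma qfn_spec {h : V → List C} {α β : List (C⊕V)} {p : ℕ} {i : ℕ}
    (hi : (iterB h α β p i).isSome) : iterB h α β p i = some (qfn h α β p i) := by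
  obtain ⟨a, ha⟩ := Option.isSome_iff_exists.1 hi
  unfold qfn; rw [ha]; rfl

lemma qfn_step {h : V → List C} {α β : List (C⊕V)} {p : ℕ} {t i : ℕ}
    (ht : t < i) (hi : (iterB h α β p i).isSome) :
    stepB h α β (qfn h α β p t) = some (qfn h α β p (t+1)) := by
  have h1 : (iterB h α β p (t+1)).isSome := iterB_isSome_of_le ht hi
  obtain ⟨a, ha, hstep⟩ := iterB_succ_some (qfn_spec h1)
  rw [qfn_spec (iterB_isSome_of_le (by omega) hi)] at ha
  rw [← Option.some.inj ha] at hstep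
  exact hstep

lemma qfn_lt {h : V → List C} {α β : List (C⊕V)} {p : ℕ} {t i : ℕ}
    (hcα : ∀ z : V, α.count (Sum.inr z) ≤ 1)
    (hpL : p < (applySub h α).length)
    (ht : t ≤ i) (hi : (iterB h α β p i).isSome) :
    qfn h α β p t < (applySub h α).length := by
  cases t with
  | zero => rw [qfn_zero]; exact hpL
  | succ t => exact stepB_lt hcα (qfn_step (by omega) hi)

/-- termination of the backward walk -/
lemma exists_stop {h : V → List C} {α β : List (C⊕V)}
    (hcα : ∀ z : V, α.count (Sum.inr z) ≤ 1) (hcβ : ∀ z : V, β.count (Sum.inr z) ≤ 1)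
    {p : ℕ} (hpL : p < (applySub h α).length)
    (hnotop : ∀ a, stepB h α β a ≠ some p) :
    ∃ i, (iterB h α β p i).isSome ∧ (iterB h α β p i).bind (stepB h α β) = none := by
  classical
  by_contra hno
  push_neg at hno
  have hall : ∀ i, (iterB h α β p i).isSome := by
    intro i
    induction i with
    | zero => rfl
    | succ i ih =>
      have hbind := hno i ih
      show ((iterB h α β p i).bind (stepB h α β)).isSome
      exact Option.ne_none_iff_isSome.1 hbind
  set L := (applySub h α).length with hL
  set qf : ℕ → ℕ := qfn h α β p with hqfdef
  have hstep : ∀ i, stepB h α β (qf i) = some (qf (i+1)) :=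
    fun i => qfn_step (Nat.lt_succ_self i) (hall (i+1))
  have hback : ∀ i, stepB h β α (qf (i+1)) = some (qf i) := fun i => stepB_inv hcα hcβ (hstep i)
  have down : ∀ i j, qf (i+1) = qf (j+1) → qf i = qf j := by
    intro i j hq
    have := (hback i).symm.trans (by rw [hq, hback j])
    exact Option.some.inj this
  have shift : ∀ i j, i ≤ j → qf i = qf j → qf 0 = qf (j - i) := by
    intro i
    induction i with
    | zero => intro j _ hq; simpa using hq
    | succ i ih =>
      intro j hij hq
      obtain ⟨j', rfl⟩ : ∃ j', j = j' + 1 := ⟨j - 1, by omega⟩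
      have := ih j' (by omega) (down _ _ hq)
      simpa using this
  have key : ∀ i j, i ≤ j → qf i = qf j → i = j := by
    intro i j hij hq
    by_contra hne
    have hd : 1 ≤ j - i := by omega
    have h0 : qf 0 = qf (j - i) := shift i j hij hq
    have : stepB h α β (qf (j - i - 1)) = some (qf (j - i)) := by
      have := hstep (j - i - 1)
      rwa [show j - i - 1 + 1 = j - i by omega] at this
    rw [← h0] at this
    rw [show qf 0 = p from rfl] at this
    exact hnotop _ this
  have hltL : ∀ i, qf i < L := by
    intro i
    exact qfn_lt hcα hpL (le_refl i) (hall i)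
  have hinj : ∀ i ∈ Finset.range (L+1), ∀ j ∈ Finset.range (L+1), qf i = qf j → i = j := by
    intro i _ j _ hq
    rcases Nat.le_total i j with hij | hij
    · exact key i j hij hq
    · exact (key j i hij hq.symm).symm
  have hcard := Finset.card_le_card_of_injOn qf
    (fun i _ => Finset.mem_range.2 (hltL i)) hinj
  simp only [Finset.card_range] at hcard
  omega

lemma exists_const_bottom {h : V → List C} {α β : List (C⊕V)}
    (hcα : ∀ z : V, α.count (Sum.inr z) ≤ 1) (hcβ : ∀ z : V, β.count (Sum.inr z) ≤ 1)
    (hsol : applySub h α = applySub h β)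
    (hmin : ∀ g : V → List C, applySub g α = applySub g β →
      (applySub h α).length ≤ (applySub g α).length)
    {p : ℕ} {z₀ : V} {r₀ : ℕ}
    (hcov₀ : cover h α p = some (Sum.inr z₀, r₀)) (hz₀ : Sum.inr z₀ ∉ β) :
    ∃ b i, iterB h α β p i = some b ∧ stepB h α β b = none ∧
      (∃ a r, cover h β b = some (Sum.inl a, r)) := by
  classical
  have hpL : p < (applySub h α).length := cover_pos_lt hcov₀
  have notop : ∀ a, stepB h α β a ≠ some p := by
    intro a hs
    obtain ⟨z', r', hcov', hm', hpe⟩ := stepB_eq_some hs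
    obtain ⟨-, hzβ', hlt'⟩ := cover_var_posIn (hcβ z') hcov'
    have hc2 : cover h α p = some (Sum.inr z', r') := by
      rw [hpe]; exact cover_at_posIn h hm' (hcα z') hlt'
    rw [hcov₀] at hc2
    have hzz : z₀ = z' := by
      have := Option.some.inj hc2
      have h1 : (Sum.inr z₀ : C ⊕ V) = Sum.inr z' := congrArg Prod.fst this
      exact Sum.inr.inj h1
    exact hz₀ (hzz ▸ hzβ')
  obtain ⟨I, hIsome, hIbind⟩ := exists_stop hcα hcβ hpL notop
  have hqI : iterB h α β p I = some (qfn h α β p I) := qfn_spec hIsome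
  set qf : ℕ → ℕ := qfn h α β p with hqf
  have hstop : stepB h α β (qf I) = none := by
    rw [hqI] at hIbind
    simpa using hIbind
  set b := qf I with hbdef
  have hq0 : qf 0 = p := rfl
  have hbL : b < (applySub h α).length := qfn_lt hcα hpL (le_refl I) hIsome
  have hbLβ : b < (applySub h β).length := by rw [← hsol]; exact hbL
  obtain ⟨s, r, hcovb, -⟩ := cover_eq_some_of_lt h β b hbLβ
  refine ⟨b, I, hqI, hstop, ?_⟩
  cases s with
  | inl a => exact ⟨a, r, hcovb⟩
  | inr zb =>
    exfalso
    have hrb : r < (h zb).length := (cover_var_posIn (hcβ zb) hcovb).2.2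
    by_cases hzbα : Sum.inr zb ∈ α
    · have : stepB h α β b = some (posIn h α zb + r) := by
        unfold stepB
        rw [hcovb]
        show (if Sum.inr zb ∈ α then some (posIn h α zb + r) else none) = _
        rw [if_pos hzbα]
      rw [hstop] at this
      exact absurd this (by simp)
    · set OL : List ℕ := (List.range (I+1)).map qf with hOL
      have hmemOL : ∀ x, x ∈ OL ↔ ∃ t, t ≤ I ∧ qf t = x := by
        intro x
        simp [hOL, List.mem_map, List.mem_range, Nat.lt_succ_iff]
      set O : ℕ → Bool := fun x => decide (x ∈ OL) with hO
      have hOiff : ∀ x, O x = true ↔ x ∈ OL := by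
        intro x; rw [hO]; exact decide_eq_true_iff
      have hcovA : ∀ t, t ≤ I → ∃ z r, cover h α (qf t) = some (Sum.inr z, r) := by
        intro t ht
        cases t with
        | zero => exact ⟨z₀, r₀, hcov₀⟩
        | succ t =>
          have hst := qfn_step (show t < I by omega) hIsome
          obtain ⟨z', r', hcov', hm', hpe⟩ := stepB_eq_some hst
          obtain ⟨-, -, hlt'⟩ := cover_var_posIn (hcβ z') hcov'
          refine ⟨z', r', ?_⟩
          show cover h α (qf (t+1)) = _
          rw [show qf (t+1) = posIn h α z' + r' from hpe]
          exact cover_at_posIn h hm' (hcα z') hlt'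
      have hcovB : ∀ t, t ≤ I → ∃ z r, cover h β (qf t) = some (Sum.inr z, r) := by
        intro t ht
        rcases Nat.lt_or_ge t I with hlt | hge
        · obtain ⟨z', r', hcov', -, -⟩ := stepB_eq_some (qfn_step hlt hIsome)
          exact ⟨z', r', hcov'⟩
        · have htI : t = I := by omega
          subst htI
          exact ⟨zb, r, hcovb⟩
      apply no_good_mask hcα hcβ hsol hmin O
      · intro x hx
        obtain ⟨t, htI, rfl⟩ := (hmemOL x).1 ((hOiff x).1 hx)
        exact hcovA t htI
      · intro x hx
        obtain ⟨t, htI, rfl⟩ := (hmemOL x).1 ((hOiff x).1 hx)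
        exact hcovB t htI
      · intro z r' hzα hzβ hr'
        rw [hO]
        apply decide_eq_decide.2
        constructor
        · intro hmem
          obtain ⟨t, htI, hqt⟩ := (hmemOL _).1 hmem
          have hct : cover h α (qf t) = some (Sum.inr z, r') := by
            rw [hqt]; exact cover_at_posIn h hzα (hcα z) hr'
          cases t with
          | zero =>
            rw [hq0, hcov₀] at hct
            have := Option.some.inj hct
            have h1 : (Sum.inr z₀ : C ⊕ V) = Sum.inr z := congrArg Prod.fst this
            exact absurd (Sum.inr.inj h1 ▸ hzβ) hz₀
          | succ t =>
            have hst := qfn_step (show t < I by omega) hIsome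
            obtain ⟨z'', r'', hcov'', hm'', hpe''⟩ := stepB_eq_some hst
            obtain ⟨hpeq'', hzβ'', hlt''⟩ := cover_var_posIn (hcβ z'') hcov''
            have hct2 : cover h α (qf (t+1)) = some (Sum.inr z'', r'') := by
              rw [show qf (t+1) = posIn h α z'' + r'' from hpe'']
              exact cover_at_posIn h hm'' (hcα z'') hlt''
            rw [hct] at hct2
            have heq := Option.some.inj hct2
            have hz2 : z = z'' := Sum.inr.inj (congrArg Prod.fst heq)
            have hr2 : r' = r'' := congrArg Prod.snd heq
            apply (hmemOL _).2
            refine ⟨t, by omega, ?_⟩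
            rw [hz2, hr2]
            exact hpeq''
        · intro hmem
          obtain ⟨t, htI, hqt⟩ := (hmemOL _).1 hmem
          have hct : cover h β (qf t) = some (Sum.inr z, r') := by
            rw [hqt]; exact cover_at_posIn h hzβ (hcβ z) hr'
          rcases Nat.lt_or_ge t I with hlt | hge
          · have hst := qfn_step hlt hIsome
            obtain ⟨z₂, r₂, hcov₂, hm₂, hpe₂⟩ := stepB_eq_some hst
            rw [hct] at hcov₂
            have heq := Option.some.inj hcov₂
            have hz2 : z = z₂ := Sum.inr.inj (congrArg Prod.fst heq)
            have hr2 : r' = r₂ := congrArg Prod.snd heq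
            apply (hmemOL _).2
            exact ⟨t+1, by omega, by rw [hz2, hr2]; exact hpe₂⟩
          · have htI : t = I := by omega
            subst htI
            rw [hcovb] at hct
            have heq := Option.some.inj hct
            have hz2 : zb = z := Sum.inr.inj (congrArg Prod.fst heq)
            exact absurd (hz2 ▸ hzα) hzbα
      · refine ⟨p, (hOiff p).2 ((hmemOL p).2 ⟨0, by omega, hq0⟩)⟩

/-! ### the counting inequality -/

lemma countP_range_eq_card_filter (n : ℕ) (f : ℕ → Bool) :
    (List.range n).countP f = ((Finset.range n).filter (fun i => f i = true)).card := by
  induction n with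
  | zero => simp
  | succ n ih =>
    rw [List.range_succ, List.countP_append, Finset.range_add_one, Finset.filter_insert]
    have hn : n ∉ Finset.filter (fun i => f i = true) (Finset.range n) := by simp
    by_cases hf : f n = true
    · rw [if_pos hf, Finset.card_insert_of_notMem hn, ← ih]
      simp [hf]
    · rw [if_neg hf, ← ih]
      rw [Bool.not_eq_true] at hf
      simp [hf]

def isAonly (β : List (C⊕V)) : (C⊕V) → Bool := fun s => match s with
  | Sum.inl _ => false
  | Sum.inr z => !(decide (Sum.inr z ∈ β))

def isConstSym : (C⊕V) → Bool := fun s => match s with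
  | Sum.inl _ => true
  | Sum.inr _ => false

lemma notop_of_aonly {h : V → List C} {α β : List (C⊕V)}
    (hcα : ∀ z : V, α.count (Sum.inr z) ≤ 1) (hcβ : ∀ z : V, β.count (Sum.inr z) ≤ 1)
    {p : ℕ} {z₀ : V} {r₀ : ℕ}
    (hcov₀ : cover h α p = some (Sum.inr z₀, r₀)) (hz₀ : Sum.inr z₀ ∉ β) :
    ∀ a, stepB h α β a ≠ some p := by
  intro a hs
  obtain ⟨z', r', hcov', hm', hpe⟩ := stepB_eq_some hs
  obtain ⟨-, hzβ', hlt'⟩ := cover_var_posIn (hcβ z') hcov'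
  have hc2 : cover h α p = some (Sum.inr z', r') := by
    rw [hpe]; exact cover_at_posIn h hm' (hcα z') hlt'
  rw [hcov₀] at hc2
  have hzz : z₀ = z' := Sum.inr.inj (congrArg Prod.fst (Option.some.inj hc2))
  exact hz₀ (hzz ▸ hzβ')

lemma cnt_aonly_le_cnt_const {h : V → List C} {α β : List (C⊕V)}
    (hcα : ∀ z : V, α.count (Sum.inr z) ≤ 1) (hcβ : ∀ z : V, β.count (Sum.inr z) ≤ 1)
    (hsol : applySub h α = applySub h β)
    (hmin : ∀ g : V → List C, applySub g α = applySub g β →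
      (applySub h α).length ≤ (applySub g α).length) :
    cnt h α (isAonly β) ≤ cnt h β isConstSym := by
  classical
  set fA : ℕ → Bool := fun p => match cover h α p with
    | some (s, _) => isAonly β s
    | none => false with hfA
  set fB : ℕ → Bool := fun p => match cover h β p with
    | some (s, _) => isConstSym s
    | none => false with hfB
  have hfAspec : ∀ p, fA p = true → ∃ z r, cover h α p = some (Sum.inr z, r) ∧ Sum.inr z ∉ β := by
    intro p hp
    have hp' : (match cover h α p with
      | some (s, _) => isAonly β s
      | none => false) = true := hp
    rcases hcov : cover h α p with _ | ⟨s, r⟩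
    · rw [hcov] at hp'; exact absurd hp' (by simp)
    · rcases s with a | z
      · rw [hcov] at hp'; exact absurd hp' (by simp [isAonly])
      · rw [hcov] at hp'
        refine ⟨z, r, rfl, ?_⟩
        have : (!(decide (Sum.inr z ∈ β))) = true := hp'
        simpa using this
  have hex : ∀ p : ℕ, fA p = true → ∃ b, (∃ i, iterB h α β p i = some b) ∧
      stepB h α β b = none ∧ (∃ a r, cover h β b = some (Sum.inl a, r)) := by
    intro p hp
    obtain ⟨z, r, hcov, hz⟩ := hfAspec p hp
    obtain ⟨b, i, h1, h2, h3⟩ := exists_const_bottom hcα hcβ hsol hmin hcov hz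
    exact ⟨b, ⟨i, h1⟩, h2, h3⟩
  choose! bot hchain hstop hconst using hex
  -- the up-the-chain equality
  have upchain : ∀ p i b, iterB h α β p i = some b → stepB h α β b = none →
      ∀ t, t ≤ i → qfn h α β p (i - t) = b → True := fun _ _ _ _ _ _ _ _ => trivial
  have hdir : ∀ p p', fA p = true → fA p' = true → bot p = bot p' →
      (∀ i i', iterB h α β p i = some (bot p) → iterB h α β p' i' = some (bot p') →
        i ≤ i' → p = p') := by
    intro p p' hp hp' hbb i i' hi hi' hii
    have hiS : (iterB h α β p i).isSome := by rw [hi]; rfl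
    have hiS' : (iterB h α β p' i').isSome := by rw [hi']; rfl
    have hqb : qfn h α β p i = bot p := by
      have := qfn_spec hiS; rw [hi] at this; exact (Option.some.inj this).symm
    have hqb' : qfn h α β p' i' = bot p' := by
      have := qfn_spec hiS'; rw [hi'] at this; exact (Option.some.inj this).symm
    have hup : ∀ t, t ≤ i → qfn h α β p (i - t) = qfn h α β p' (i' - t) := by
      intro t
      induction t with
      | zero => intro _; simpa [hqb, hqb'] using hbb
      | succ t ih =>
        intro hti
        have hprev := ih (by omega)
        have h1 : stepB h α β (qfn h α β p (i - t - 1)) = some (qfn h α β p (i - t)) := by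
          have := qfn_step (show i - t - 1 < i by omega) hiS
          rwa [show i - t - 1 + 1 = i - t by omega] at this
        have h1' : stepB h α β (qfn h α β p' (i' - t - 1)) = some (qfn h α β p' (i' - t)) := by
          have := qfn_step (show i' - t - 1 < i' by omega) hiS'
          rwa [show i' - t - 1 + 1 = i' - t by omega] at this
        have h2 := stepB_inv hcα hcβ h1
        have h2' := stepB_inv hcα hcβ h1'
        rw [hprev] at h2
        have := h2.symm.trans h2'
        have heq := Option.some.inj this
        rwa [show i - (t+1) = i - t - 1 by omega, show i' - (t+1) = i' - t - 1 by omega]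
    -- t = i
    have hfin := hup i (le_refl i)
    rw [Nat.sub_self] at hfin
    obtain ⟨z, r, hcov, hz⟩ := hfAspec p hp
    obtain ⟨z', r', hcov', hz'⟩ := hfAspec p' hp'
    have hnotop := notop_of_aonly hcα hcβ hcov hz
    by_cases hii2 : i = i'
    · subst hii2
      rw [Nat.sub_self] at hfin
      have : (p : ℕ) = p' := by
        have e1 : qfn h α β p 0 = p := rfl
        have e2 : qfn h α β p' 0 = p' := rfl
        rw [e1, e2] at hfin; exact hfin
      exact this
    · exfalso
      have hd : 1 ≤ i' - i := by omega
      have hstep' : stepB h α β (qfn h α β p' (i' - i - 1)) = some (qfn h α β p' (i' - i)) := by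
        have := qfn_step (show i' - i - 1 < i' by omega) hiS'
        rwa [show i' - i - 1 + 1 = i' - i by omega] at this
      have : qfn h α β p' (i' - i) = p := by
        have e1 : qfn h α β p 0 = p := rfl
        rw [e1] at hfin; exact hfin.symm
      rw [this] at hstep'
      exact hnotop _ hstep'
  -- assemble the card inequality
  have hL : (applySub h β).length = (applySub h α).length := by rw [hsol]
  rw [cnt, cnt, ← hfA, ← hfB, countP_range_eq_card_filter, countP_range_eq_card_filter]
  apply Finset.card_le_card_of_injOn bot
  · intro p hp
    rw [Finset.mem_coe, Finset.mem_filter, Finset.mem_range] at hp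
    obtain ⟨hpL, hpA⟩ := hp
    rw [Finset.mem_coe, Finset.mem_filter, Finset.mem_range]
    obtain ⟨a, r, hcov⟩ := hconst p hpA
    constructor
    · exact cover_pos_lt hcov
    · show (match cover h β (bot p) with
        | some (s, _) => isConstSym s
        | none => false) = true
      rw [hcov]
      rfl
  · intro p hp p' hp' hbb
    rw [Finset.mem_coe, Finset.mem_filter] at hp hp'
    obtain ⟨i, hi⟩ := hchain p hp.2
    obtain ⟨i', hi'⟩ := hchain p' hp'.2
    rcases Nat.le_total i i' with hii | hii
    · exact hdir p p' hp.2 hp'.2 hbb i i' hi hi' hii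
    · exact (hdir p' p hp'.2 hp.2 hbb.symm i' i hi' hi hii).symm

/-! ### shortening a shared variable -/

lemma shared_short_of_le {h : V → List C} {α β : List (C⊕V)}
    (hcα : ∀ z : V, α.count (Sum.inr z) ≤ 1) (hcβ : ∀ z : V, β.count (Sum.inr z) ≤ 1)
    (hsol : applySub h α = applySub h β)
    (hmin : ∀ g : V → List C, applySub g α = applySub g β →
      (applySub h α).length ≤ (applySub g α).length)
    {z : V} (hzα : Sum.inr z ∈ α) (hzβ : Sum.inr z ∈ β)
    (hqp : posIn h β z ≤ posIn h α z) :
    (h z).length = 0 ∨ (h z).length < posIn h α z - posIn h β z := by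
  classical
  by_contra hcon
  push_neg at hcon
  obtain ⟨hM1, hMd⟩ := hcon
  have hM : 1 ≤ (h z).length := by omega
  obtain ⟨μ, ν, hα, hzμ, hzν, hpμ⟩ := exists_split_posIn h hzα (hcα z)
  obtain ⟨μ', ν', hβ, hzμ', hzν', hpμ'⟩ := exists_split_posIn h hzβ (hcβ z)
  set p := posIn h α z with hp
  set q := posIn h β z with hq
  set M := (h z).length with hMdef
  set d := p - q with hd
  have hwα : applySub h α = applySub h μ ++ (h z ++ applySub h ν) := by
    rw [hα, applySub_append, applySub_cons]
    simp [img]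
  have hwβ : applySub h β = applySub h μ' ++ (h z ++ applySub h ν') := by
    rw [hβ, applySub_append, applySub_cons]
    simp [img]
  -- μ' is the length-q prefix of μ
  have htakeα : (applySub h α).take q = (applySub h μ).take q := by
    rw [hwα]
    exact List.take_append_of_le_length (by omega)
  have htakeβ : (applySub h β).take q = applySub h μ' := by
    rw [hwβ]
    exact List.take_left' hpμ'
  have hBμ : applySub h μ' = (applySub h μ).take q := by
    rw [← htakeα, ← htakeβ, hsol]
  set e : List C := (applySub h μ).drop q with he
  have hμsplit : applySub h μ = applySub h μ' ++ e := by
    rw [hBμ, he, List.take_append_drop]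
  have helen : e.length = d := by
    have : (applySub h μ).length = q + e.length := by
      rw [hμsplit] at hpμ ⊢
      rw [List.length_append, hpμ']
    omega
  -- the key identity
  have hstar : e ++ (h z ++ applySub h ν) = h z ++ applySub h ν' := by
    have := hsol
    rw [hwα, hwβ, hμsplit, List.append_assoc] at this
    exact List.append_cancel_left this
  by_cases hd0 : d = 0
  · have he0 : e = [] := List.length_eq_zero_iff.1 (by omega)
    have hνν : applySub h ν = applySub h ν' := by
      have h2 := hstar
      rw [he0] at h2
      simp only [List.nil_append] at h2
      exact List.append_cancel_left h2
    have hμeq : applySub h μ = applySub h μ' := by rw [hμsplit, he0]; simp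
    have hgz : Function.update h z ([] : List C) z = [] := Function.update_self z [] h
    have hgα : applySub (Function.update h z []) α = applySub h μ ++ applySub h ν := by
      rw [hα, applySub_append, applySub_cons, applySub_update_not_mem h z [] μ hzμ,
        applySub_update_not_mem h z [] ν hzν]
      simp [img, hgz]
    have hgβ : applySub (Function.update h z []) β = applySub h μ' ++ applySub h ν' := by
      rw [hβ, applySub_append, applySub_cons, applySub_update_not_mem h z [] μ' hzμ',
        applySub_update_not_mem h z [] ν' hzν']
      simp [img, hgz]
    have hsolg : applySub (Function.update h z []) α = applySub (Function.update h z []) β := by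
      rw [hgα, hgβ, hμeq, hνν]
    have hle := hmin _ hsolg
    have hlen : (applySub (Function.update h z []) α).length < (applySub h α).length := by
      rw [hgα, hwα]
      simp only [List.length_append]
      omega
    omega
  have hd1 : 1 ≤ d := by omega
  -- h z = e ++ (h z).take (M - d)
  have hzdec : h z = e ++ (h z).take (M - d) := by
    have h1 : (e ++ (h z ++ applySub h ν)).take M = (h z ++ applySub h ν').take M := by
      rw [hstar]
    rw [List.take_append] at h1
    have he2 : e.take M = e := List.take_of_length_le (by omega)
    rw [he2] at h1
    have h3 : (h z ++ applySub h ν').take M = h z := List.take_left' rfl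
    rw [h3] at h1
    rw [List.take_append] at h1
    have h4 : (h z).take (M - e.length) = (h z).take (M - d) := by rw [helen]
    have h5 : M - e.length - (h z).length = 0 := by omega
    rw [h4, h5] at h1
    simpa using h1.symm
  set z' : List C := (h z).take (M - d) with hz'
  have hz'len : z'.length = M - d := by
    rw [hz']
    exact List.length_take_of_le (by omega)
  -- the shorter solution
  set g := Function.update h z z' with hg
  have hgz : g z = z' := Function.update_self z z' h
  have hgα : applySub g α = applySub h μ ++ (z' ++ applySub h ν) := by
    rw [hα, applySub_append, applySub_cons]
    rw [applySub_update_not_mem h z z' μ hzμ, applySub_update_not_mem h z z' ν hzν]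
    simp [img, hgz]
  have hgβ : applySub g β = applySub h μ' ++ (z' ++ applySub h ν') := by
    rw [hβ, applySub_append, applySub_cons]
    rw [applySub_update_not_mem h z z' μ' hzμ', applySub_update_not_mem h z z' ν' hzν']
    simp [img, hgz]
  have hcancel : h z ++ applySub h ν = z' ++ applySub h ν' := by
    have h1 : e ++ (h z ++ applySub h ν) = e ++ (z' ++ applySub h ν') := by
      rw [hstar]
      rw [show h z ++ applySub h ν' = (e ++ z') ++ applySub h ν' by rw [← hzdec]]
      rw [List.append_assoc]
    exact List.append_cancel_left h1
  have hsolg : applySub g α = applySub g β := by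
    rw [hgα, hgβ, hμsplit, List.append_assoc]
    congr 1
    rw [← hcancel, ← List.append_assoc, ← hzdec]
  have hlen : (applySub g α).length < (applySub h α).length := by
    rw [hgα, hwα]
    simp only [List.length_append, hz'len]
    omega
  have := hmin g hsolg
  omega

/-! ### indexOf and prefix membership -/

lemma indexOf_append_of_mem {A : Type} [BEq A] [LawfulBEq A] {a : A} {l₁ l₂ : List A}
    (hm : a ∈ l₁) : (l₁ ++ l₂).idxOf a = l₁.idxOf a := by
  induction l₁ with
  | nil => simp at hm
  | cons b l ih =>
    by_cases hba : b = a
    · subst hba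
      simp [List.idxOf_cons]
    · rw [List.cons_append, List.idxOf_cons, List.idxOf_cons, beq_false_of_ne hba]
      have : a ∈ l := by
        rcases List.mem_cons.1 hm with h1 | h1
        · exact absurd h1.symm hba
        · exact h1
      simp [ih this]

lemma indexOf_append_of_not_mem {A : Type} [BEq A] [LawfulBEq A] {a : A} {l₁ l₂ : List A}
    (hm : a ∉ l₁) : (l₁ ++ l₂).idxOf a = l₁.length + l₂.idxOf a := by
  induction l₁ with
  | nil => simp
  | cons b l ih =>
    have hba : b ≠ a := by rintro rfl; exact hm (List.mem_cons_self)
    rw [List.cons_append, List.idxOf_cons, beq_false_of_ne hba,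
      ih (fun hh => hm (List.mem_cons_of_mem _ hh))]
    simp [List.length_cons]
    omega

lemma indexOf_lt_length_of_mem {A : Type} [BEq A] [LawfulBEq A] {a : A} {l : List A}
    (hm : a ∈ l) : l.idxOf a < l.length := by
  induction l with
  | nil => simp at hm
  | cons b l ih =>
    by_cases hba : b = a
    · subst hba; simp [List.idxOf_cons]
    · rw [List.idxOf_cons, beq_false_of_ne hba]
      have : a ∈ l := by
        rcases List.mem_cons.1 hm with h1 | h1
        · exact absurd h1.symm hba
        · exact h1
      simp [List.length_cons]
      exact ih this

lemma mem_prefix_iff_indexOf {σ μ ν : List (C⊕V)} {z z' : V}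
    (hσ : σ = μ ++ Sum.inr z :: ν) (hzμ : Sum.inr z ∉ μ) :
    Sum.inr z' ∈ μ ↔ σ.idxOf (Sum.inr z') < σ.idxOf (Sum.inr z) := by
  have hidxz : σ.idxOf (Sum.inr z) = μ.length := by
    rw [hσ]; exact indexOf_append_cons _ _ _ hzμ
  constructor
  · intro hm
    rw [hidxz, hσ, indexOf_append_of_mem hm]
    exact indexOf_lt_length_of_mem hm
  · intro hlt
    by_contra hm
    rw [hidxz, hσ, indexOf_append_of_not_mem hm] at hlt
    omega

/-! ### length decomposition -/

def fsum (h : V → List C) (Q : (C⊕V) → Bool) (σ : List (C⊕V)) : ℕ :=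
  ((σ.filter Q).map (fun s => (img h s).length)).sum

def isShV (τ : List (C⊕V)) : (C⊕V) → Bool := fun s => match s with
  | Sum.inl _ => false
  | Sum.inr z => decide (Sum.inr z ∈ τ)

lemma fsum_append (h : V → List C) (Q : (C⊕V) → Bool) (σ τ : List (C⊕V)) :
    fsum h Q (σ ++ τ) = fsum h Q σ + fsum h Q τ := by
  unfold fsum
  rw [List.filter_append, List.map_append, List.sum_append]

lemma wlen_decomp (h : V → List C) (τ : List (C⊕V)) (σ : List (C⊕V)) :
    (applySub h σ).length =
      (σ.filter isConstSym).length + fsum h (isShV τ) σ + fsum h (isAonly τ) σ := by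
  induction σ with
  | nil => simp [fsum]
  | cons s σ ih =>
    rw [applySub_cons, List.length_append, ih]
    cases s with
    | inl a =>
      have h1 : isConstSym (Sum.inl a : C⊕V) = true := rfl
      have h2 : isShV τ (Sum.inl a : C⊕V) = false := rfl
      have h3 : isAonly τ (Sum.inl a : C⊕V) = false := rfl
      unfold fsum
      rw [List.filter_cons, List.filter_cons, List.filter_cons, h1, h2, h3]
      simp [img]
      omega
    | inr z =>
      have h1 : isConstSym (Sum.inr z : C⊕V) = false := rfl
      unfold fsum
      rw [List.filter_cons, List.filter_cons, List.filter_cons, h1]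
      by_cases hmem : Sum.inr z ∈ τ
      · have h2 : isShV τ (Sum.inr z : C⊕V) = true := by simp [isShV, hmem]
        have h3 : isAonly τ (Sum.inr z : C⊕V) = false := by simp [isAonly, hmem]
        rw [h2, h3]
        simp [img]
        omega
      · have h2 : isShV τ (Sum.inr z : C⊕V) = false := by simp [isShV, hmem]
        have h3 : isAonly τ (Sum.inr z : C⊕V) = true := by simp [isAonly, hmem]
        rw [h2, h3]
        simp [img]
        omega

lemma cnt_eq_fsum (h : V → List C) (Q : (C⊕V) → Bool) (σ : List (C⊕V)) :
    cnt h σ Q = fsum h Q σ := by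
  rw [cnt_eq_sum]
  induction σ with
  | nil => simp [fsum]
  | cons s σ ih =>
    rw [List.map_cons, List.sum_cons]
    by_cases hq : Q s = true
    · have hf : fsum h Q (s :: σ) = (img h s).length + fsum h Q σ := by
        unfold fsum
        rw [List.filter_cons, if_pos hq, List.map_cons, List.sum_cons]
      rw [hf, if_pos hq, ih]
    · have hf : fsum h Q (s :: σ) = fsum h Q σ := by
        unfold fsum
        rw [List.filter_cons, if_neg hq]
      rw [hf, if_neg hq, ih]
      omega

lemma cnt_const_eq (h : V → List C) (σ : List (C⊕V)) :
    cnt h σ isConstSym = (σ.filter isConstSym).length := by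
  rw [cnt_eq_fsum]
  unfold fsum
  induction σ with
  | nil => simp
  | cons s σ ih =>
    cases s with
    | inl a =>
      have hfil : (Sum.inl a :: σ).filter isConstSym = Sum.inl a :: σ.filter isConstSym := by
        rw [List.filter_cons]; simp [isConstSym]
      rw [hfil, List.map_cons, List.sum_cons, List.length_cons, ih]
      simp [img]
      omega
    | inr z =>
      have hfil : (Sum.inr z :: σ).filter isConstSym = σ.filter isConstSym := by
        rw [List.filter_cons]; simp [isConstSym]
      rw [hfil, ih]

/-! ### equality of shared sums over matched prefixes -/

lemma nodup_filter_vars {τ : List (C⊕V)} (hc : ∀ z : V, τ.count (Sum.inr z) ≤ 1)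
    (Q : (C⊕V) → Bool) (hQ : ∀ a : C, Q (Sum.inl a) = false) :
    (τ.filter Q).Nodup := by
  induction τ with
  | nil => simp
  | cons s τ ih =>
    have hc' : ∀ z : V, τ.count (Sum.inr z) ≤ 1 := by
      intro z
      have h1 := hc z
      have h2 : τ.count (Sum.inr z) ≤ (s :: τ).count (Sum.inr z) := by
        rw [List.count_cons]
        omega
      omega
    rw [List.filter_cons]
    by_cases hq : Q s = true
    · rw [if_pos hq]
      apply List.Nodup.cons _ (ih hc')
      cases s with
      | inl a => rw [hQ a] at hq; exact Bool.noConfusion hq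
      | inr z =>
        intro hm
        have hmτ : Sum.inr z ∈ τ := (List.filter_sublist (l := τ)).mem hm
        have h1 := hc z
        rw [List.count_cons_self] at h1
        have h2 := List.count_pos_iff.2 hmτ
        omega
    · rw [if_neg hq]
      exact ih hc'

lemma shared_prefix_sum_eq {h : V → List C} {α β : List (C⊕V)}
    (hcα : ∀ z : V, α.count (Sum.inr z) ≤ 1) (hcβ : ∀ z : V, β.count (Sum.inr z) ≤ 1)
    (horder : ∀ x y : V, Sum.inr x ∈ α → Sum.inr x ∈ β → Sum.inr y ∈ α → Sum.inr y ∈ β →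
      (α.idxOf (Sum.inr x) < α.idxOf (Sum.inr y) ↔
        β.idxOf (Sum.inr x) < β.idxOf (Sum.inr y)))
    {z : V} {μ ν μ' ν' : List (C⊕V)}
    (hα : α = μ ++ Sum.inr z :: ν) (hzμ : Sum.inr z ∉ μ)
    (hβ : β = μ' ++ Sum.inr z :: ν') (hzμ' : Sum.inr z ∉ μ')
    (hzα : Sum.inr z ∈ α) (hzβ : Sum.inr z ∈ β) :
    fsum h (isShV β) μ = fsum h (isShV α) μ' := by
  classical
  have hsubμ : List.Sublist μ α := by rw [hα]; exact List.sublist_append_left μ _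
  have hsubμ' : List.Sublist μ' β := by rw [hβ]; exact List.sublist_append_left μ' _
  have hnd1 : (μ.filter (isShV β)).Nodup :=
    nodup_filter_vars (fun z => le_trans (hsubμ.count_le _) (hcα z)) _ (fun a => rfl)
  have hnd2 : (μ'.filter (isShV α)).Nodup :=
    nodup_filter_vars (fun z => le_trans (hsubμ'.count_le _) (hcβ z)) _ (fun a => rfl)
  have hset : (μ.filter (isShV β)).toFinset = (μ'.filter (isShV α)).toFinset := by
    ext s
    simp only [List.mem_toFinset, List.mem_filter]
    cases s with
    | inl a =>
      constructor
      · rintro ⟨-, hq⟩; exact absurd hq (by simp [isShV])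
      · rintro ⟨-, hq⟩; exact absurd hq (by simp [isShV])
    | inr z' =>
      have hiff : ∀ (hz'α : Sum.inr z' ∈ α) (hz'β : Sum.inr z' ∈ β),
          (Sum.inr z' ∈ μ ↔ Sum.inr z' ∈ μ') := by
        intro hz'α hz'β
        rw [mem_prefix_iff_indexOf hα hzμ, mem_prefix_iff_indexOf hβ hzμ']
        exact horder z' z hz'α hz'β hzα hzβ
      constructor
      · rintro ⟨hmμ, hq⟩
        have hz'β : Sum.inr z' ∈ β := by simpa [isShV] using hq
        have hz'α : Sum.inr z' ∈ α := hsubμ.mem hmμ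
        exact ⟨(hiff hz'α hz'β).1 hmμ, by simp [isShV, hz'α]⟩
      · rintro ⟨hmμ', hq⟩
        have hz'α : Sum.inr z' ∈ α := by simpa [isShV] using hq
        have hz'β : Sum.inr z' ∈ β := hsubμ'.mem hmμ'
        exact ⟨(hiff hz'α hz'β).2 hmμ', by simp [isShV, hz'β]⟩
  unfold fsum
  rw [← List.sum_toFinset _ hnd1, ← List.sum_toFinset _ hnd2, hset]

/-! ### final assembly helpers -/

lemma filter_len_lt_of_mem_var {l : List (C⊕V)} {s : C⊕V} (hm : s ∈ l)
    (hs : isConstSym s = false) : (l.filter isConstSym).length < l.length := by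
  induction l with
  | nil => simp at hm
  | cons t l ih =>
    rw [List.filter_cons]
    rcases List.mem_cons.1 hm with rfl | hml
    · rw [if_neg (by rw [hs]; exact Bool.false_ne_true)]
      have := List.length_filter_le isConstSym l
      simp only [List.length_cons]
      omega
    · have := ih hml
      by_cases hq : isConstSym t = true
      · rw [if_pos hq]
        simp only [List.length_cons]
        omega
      · rw [if_neg hq]
        have := List.length_filter_le isConstSym l
        simp only [List.length_cons]
        omega

lemma fsum_cons_var (h : V → List C) {Q : (C⊕V) → Bool} {z : V} (σ : List (C⊕V))
    (hQ : Q (Sum.inr z) = true) :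
    fsum h Q (Sum.inr z :: σ) = (h z).length + fsum h Q σ := by
  unfold fsum
  rw [List.filter_cons, if_pos hQ, List.map_cons, List.sum_cons]
  rfl

/-- main bound for a variable occurring on exactly one side -/
lemma oneside_bound {h : V → List C} {α β : List (C⊕V)}
    (hcα : ∀ z : V, α.count (Sum.inr z) ≤ 1) (hcβ : ∀ z : V, β.count (Sum.inr z) ≤ 1)
    (hsol : applySub h α = applySub h β)
    (hmin : ∀ g : V → List C, applySub g α = applySub g β →
      (applySub h α).length ≤ (applySub g α).length)
    {x : V} (hxα : Sum.inr x ∈ α) (hxβ : Sum.inr x ∉ β) :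
    (h x).length ≤ (β.filter isConstSym).length := by
  obtain ⟨μ, ν, hα, hxμ, hxν, hpμ⟩ := exists_split_posIn h hxα (hcα x)
  have hQx : isAonly β (Sum.inr x : C⊕V) = true := by simp [isAonly, hxβ]
  have h1 : (h x).length ≤ fsum h (isAonly β) α := by
    rw [hα, fsum_append, fsum_cons_var h _ hQx]
    omega
  have h2 : fsum h (isAonly β) α ≤ fsum h isConstSym β := by
    rw [← cnt_eq_fsum, ← cnt_eq_fsum]
    exact cnt_aonly_le_cnt_const hcα hcβ hsol hmin
  have h3 : fsum h isConstSym β = (β.filter isConstSym).length := by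
    rw [← cnt_eq_fsum]
    exact cnt_const_eq h β
  omega

/-- swapped-orientation minimality -/
lemma hmin_swap {h : V → List C} {α β : List (C⊕V)}
    (hsol : applySub h α = applySub h β)
    (hmin : ∀ g : V → List C, applySub g α = applySub g β →
      (applySub h α).length ≤ (applySub g α).length) :
    ∀ g : V → List C, applySub g β = applySub g α →
      (applySub h β).length ≤ (applySub g β).length := by
  intro g hg
  have := hmin g hg.symm
  rw [← hsol, hg] at *
  omega

/-- main bound for a shared variable -/
lemma shared_bound {h : V → List C} {α β : List (C⊕V)}
    (hcα : ∀ z : V, α.count (Sum.inr z) ≤ 1) (hcβ : ∀ z : V, β.count (Sum.inr z) ≤ 1)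
    (hsol : applySub h α = applySub h β)
    (hmin : ∀ g : V → List C, applySub g α = applySub g β →
      (applySub h α).length ≤ (applySub g α).length)
    (horder : ∀ x y : V, Sum.inr x ∈ α → Sum.inr x ∈ β → Sum.inr y ∈ α → Sum.inr y ∈ β →
      (α.idxOf (Sum.inr x) < α.idxOf (Sum.inr y) ↔
        β.idxOf (Sum.inr x) < β.idxOf (Sum.inr y)))
    {x : V} (hxα : Sum.inr x ∈ α) (hxβ : Sum.inr x ∈ β) :
    (h x).length = 0 ∨
      (h x).length < (α.filter isConstSym).length + (β.filter isConstSym).length := by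
  classical
  obtain ⟨μ, ν, hα, hxμ, hxν, hpμ⟩ := exists_split_posIn h hxα (hcα x)
  obtain ⟨μ', ν', hβ, hxμ', hxν', hpμ'⟩ := exists_split_posIn h hxβ (hcβ x)
  have hsol' : applySub h β = applySub h α := hsol.symm
  have hmin' := hmin_swap hsol hmin
  have hdecμ : (applySub h μ).length =
      (μ.filter isConstSym).length + fsum h (isShV β) μ + fsum h (isAonly β) μ :=
    wlen_decomp h β μ
  have hdecμ' : (applySub h μ').length =
      (μ'.filter isConstSym).length + fsum h (isShV α) μ' + fsum h (isAonly α) μ' :=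
    wlen_decomp h α μ'
  have hSH : fsum h (isShV β) μ = fsum h (isShV α) μ' :=
    shared_prefix_sum_eq hcα hcβ horder hα hxμ hβ hxμ' hxα hxβ
  have hc1 : (μ.filter isConstSym).length ≤ (α.filter isConstSym).length := by
    rw [hα, List.filter_append, List.length_append]
    omega
  have hc2 : (μ'.filter isConstSym).length ≤ (β.filter isConstSym).length := by
    rw [hβ, List.filter_append, List.length_append]
    omega
  have ha1 : fsum h (isAonly β) μ ≤ (β.filter isConstSym).length := by
    have hb1 : fsum h (isAonly β) μ ≤ fsum h (isAonly β) α := by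
      rw [hα, fsum_append]
      omega
    have hb2 : fsum h (isAonly β) α ≤ fsum h isConstSym β := by
      rw [← cnt_eq_fsum, ← cnt_eq_fsum]
      exact cnt_aonly_le_cnt_const hcα hcβ hsol hmin
    have hb3 : fsum h isConstSym β = (β.filter isConstSym).length := by
      rw [← cnt_eq_fsum]; exact cnt_const_eq h β
    omega
  have ha2 : fsum h (isAonly α) μ' ≤ (α.filter isConstSym).length := by
    have hb1 : fsum h (isAonly α) μ' ≤ fsum h (isAonly α) β := by
      rw [hβ, fsum_append]
      omega
    have hb2 : fsum h (isAonly α) β ≤ fsum h isConstSym α := by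
      rw [← cnt_eq_fsum, ← cnt_eq_fsum]
      exact cnt_aonly_le_cnt_const hcβ hcα hsol' hmin'
    have hb3 : fsum h isConstSym α = (α.filter isConstSym).length := by
      rw [← cnt_eq_fsum]; exact cnt_const_eq h α
    omega
  rcases le_total (posIn h β x) (posIn h α x) with hqp | hpq
  · rcases shared_short_of_le hcα hcβ hsol hmin hxα hxβ hqp with h0 | hlt
    · exact Or.inl h0
    · right
      have hq : posIn h β x ≥ fsum h (isShV α) μ' := by
        rw [← hpμ'] at *
        omega
      rw [← hpμ, ← hpμ'] at hlt
      omega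
  · rcases shared_short_of_le hcβ hcα hsol' hmin' hxβ hxα hpq with h0 | hlt
    · exact Or.inl h0
    · right
      have hp : posIn h α x ≥ fsum h (isShV β) μ := by
        rw [← hpμ] at *
        omega
      rw [← hpμ, ← hpμ'] at hlt
      omega

end S9

open WEq in
theorem stmt9 (C V : Type) [DecidableEq C] [DecidableEq V]
    (α β : List (C ⊕ V)) (h : V → List C)
    (hro : RegularOrdered α β)
    (hsol : applySub h α = applySub h β)
    (hmin : ∀ g : V → List C, applySub g α = applySub g β →
      (applySub h α).length ≤ (applySub g α).length) :
    ∀ x : V, Sum.inr x ∈ α ++ β → (h x).length < (α ++ β).length := by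
  classical
  obtain ⟨hreg, horder⟩ := hro
  have hcα : ∀ z : V, α.count (Sum.inr z) ≤ 1 := fun z => (hreg z).1
  have hcβ : ∀ z : V, β.count (Sum.inr z) ≤ 1 := fun z => (hreg z).2
  intro x hx
  have hxs : S9.isConstSym (Sum.inr x : C ⊕ V) = false := rfl
  have hn : (α ++ β).length = α.length + β.length := List.length_append
  have hcαle : (α.filter S9.isConstSym).length ≤ α.length := List.length_filter_le _ _
  have hcβle : (β.filter S9.isConstSym).length ≤ β.length := List.length_filter_le _ _
  have hsol' : applySub h β = applySub h α := hsol.symm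
  have hmin' := S9.hmin_swap hsol hmin
  rcases List.mem_append.1 hx with hxα | hxβ
  · have hαpos : 1 ≤ α.length := List.length_pos_iff.2 (List.ne_nil_of_mem hxα)
    by_cases hxb : Sum.inr x ∈ β
    · have hstrictα : (α.filter S9.isConstSym).length < α.length :=
        S9.filter_len_lt_of_mem_var hxα hxs
      have hstrictβ : (β.filter S9.isConstSym).length < β.length :=
        S9.filter_len_lt_of_mem_var hxb hxs
      rcases S9.shared_bound hcα hcβ hsol hmin horder hxα hxb with h0 | hlt
      · omega
      · omega
    · have h1 := S9.oneside_bound hcα hcβ hsol hmin hxα hxb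
      omega
  · have hβpos : 1 ≤ β.length := List.length_pos_iff.2 (List.ne_nil_of_mem hxβ)
    by_cases hxa : Sum.inr x ∈ α
    · have hstrictα : (α.filter S9.isConstSym).length < α.length :=
        S9.filter_len_lt_of_mem_var hxa hxs
      have hstrictβ : (β.filter S9.isConstSym).length < β.length :=
        S9.filter_len_lt_of_mem_var hxβ hxs
      rcases S9.shared_bound hcα hcβ hsol hmin horder hxa hxβ with h0 | hlt
      · omega
      · omega
    · have horder' : ∀ x y : V, Sum.inr x ∈ β → Sum.inr x ∈ α → Sum.inr y ∈ β → Sum.inr y ∈ α →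
          (β.idxOf (Sum.inr x) < β.idxOf (Sum.inr y) ↔
            α.idxOf (Sum.inr x) < α.idxOf (Sum.inr y)) := by
        intro a b h1 h2 h3 h4
        exact (horder a b h2 h1 h4 h3).symm
      have h1 := S9.oneside_bound hcβ hcα hsol' hmin' hxβ hxa
      omega
end

section
/- Let k ∈ ℕ and let v_0, v_1, …, v_k, u_1, u_2, …, u_k ∈ Σ^* be constant words, and let x, x_0, x_1, …, x_{2k+1} be distinct variables. Let Ψ be the system of word equations x = x_0 v_0 x_1, x = x_1 u_1 x_2, x = x_2 v_1 x_3, x = x_3 u_2 x_4, …, x = x_{2k} v_k x_{2k+1} (i.e., x = x_{2j} v_j x_{2j+1} for 0 ≤ j ≤ k and x = x_{2j−1} u_j x_{2j} for 1 ≤ j ≤ k). Let h be any solution to Ψ, and let L = |u_1| + ⋯ + |u_k| + |v_0| + ⋯ + |v_k|. Then for any two indices i, j ∈ {0, 2, …, 2k} (both even), ||h(x_i)| − |h(x_j)|| ≤ L, and likewise for any two indices i, j ∈ {1, 3, …, 2k+1} (both odd), ||h(x_i)| − |h(x_j)|| ≤ L. -/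
/-!
STATEMENT 13 (Claim on lengths): for any solution of the system
Ψ : x = x_{2j} v_j x_{2j+1} (0 ≤ j ≤ k), x = x_{2j-1} u_j x_{2j} (1 ≤ j ≤ k),
the lengths of the images of any two even-indexed (resp. any two odd-indexed)
variables differ by at most L = |u_1| + ⋯ + |u_k| + |v_0| + ⋯ + |v_k|.
`X` denotes the image of x and `g i` the image of x_i.
-/

theorem stmt13 (S : Type) (k : ℕ) (u v : ℕ → List S) (X : List S) (g : ℕ → List S)
    (hΨv : ∀ j, j ≤ k → X = g (2 * j) ++ v j ++ g (2 * j + 1))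
    (hΨu : ∀ j, 1 ≤ j → j ≤ k → X = g (2 * j - 1) ++ u j ++ g (2 * j)) :
    (∀ i j, i ≤ 2 * k → j ≤ 2 * k → i % 2 = 0 → j % 2 = 0 →
      |((g i).length : ℤ) - ((g j).length : ℤ)| ≤
        (∑ l ∈ Finset.Icc 1 k, (u l).length : ℤ) +
          (∑ l ∈ Finset.range (k + 1), (v l).length : ℤ)) ∧
    (∀ i j, 1 ≤ i → i ≤ 2 * k + 1 → 1 ≤ j → j ≤ 2 * k + 1 → i % 2 = 1 → j % 2 = 1 →
      |((g i).length : ℤ) - ((g j).length : ℤ)| ≤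
        (∑ l ∈ Finset.Icc 1 k, (u l).length : ℤ) +
          (∑ l ∈ Finset.range (k + 1), (v l).length : ℤ)) := by
  set A : ℕ → ℤ := fun j => ((g (2*j)).length : ℤ) with hA
  set B : ℕ → ℤ := fun j => ((g (2*j+1)).length : ℤ) with hB
  set L : ℤ := (∑ l ∈ Finset.Icc 1 k, (u l).length : ℤ) +
      (∑ l ∈ Finset.range (k + 1), (v l).length : ℤ) with hL
  have hv : ∀ j, j ≤ k → (X.length : ℤ) = A j + ((v j).length:ℤ) + B j := by
    intro j hj
    rw [hΨv j hj]
    simp [hA, hB]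
    ring
  have hu : ∀ j, 1 ≤ j → j ≤ k → (X.length : ℤ) = B (j-1) + ((u j).length:ℤ) + A j := by
    intro j h1 h2
    have e : 2*(j-1)+1 = 2*j - 1 := by omega
    rw [hΨu j h1 h2]
    simp [hA, hB, e]
    ring
  have recA : ∀ j, 1 ≤ j → j ≤ k → A j = A (j-1) + ((v (j-1)).length:ℤ) - ((u j).length:ℤ) := by
    intro j h1 h2
    have e1 := hu j h1 h2
    have e2 := hv (j-1) (by omega)
    linarith
  have recB : ∀ j, 1 ≤ j → j ≤ k → B j = B (j-1) + ((u j).length:ℤ) - ((v j).length:ℤ) := by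
    intro j h1 h2
    have e1 := hu j h1 h2
    have e2 := hv j h2
    linarith
  have keyA : ∀ j i, j ≤ i → i ≤ k →
      |A i - A j| ≤ ∑ l ∈ Finset.Ico j i, (((u (l+1)).length : ℤ) + ((v l).length : ℤ)) := by
    intro j i hji hik
    induction i, hji using Nat.le_induction with
    | base => simp
    | succ i hji ih =>
      have h1 := ih (by omega)
      have h2 := recA (i+1) (by omega) (by omega)
      simp only [Nat.add_sub_cancel] at h2
      rw [Finset.sum_Ico_succ_top (by omega)]
      have e : A (i+1) - A j = (A i - A j) + (((v i).length:ℤ) - ((u (i+1)).length:ℤ)) := by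
        rw [h2]; ring
      have habs : |A (i+1) - A j| ≤ |A i - A j| + (((u (i+1)).length:ℤ) + ((v i).length:ℤ)) := by
        rw [e]
        refine (abs_add_le _ _).trans ?_
        have : |((v i).length:ℤ) - ((u (i+1)).length:ℤ)| ≤ ((u (i+1)).length:ℤ) + ((v i).length:ℤ) := by
          have h0u := Int.natCast_nonneg (u (i+1)).length
          have h0v := Int.natCast_nonneg (v i).length
          rw [abs_sub_le_iff]
          constructor <;> linarith
        linarith
      linarith
  have keyB : ∀ j i, j ≤ i → i ≤ k →
      |B i - B j| ≤ ∑ l ∈ Finset.Ico j i, (((u (l+1)).length : ℤ) + ((v (l+1)).length : ℤ)) := by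
    intro j i hji hik
    induction i, hji using Nat.le_induction with
    | base => simp
    | succ i hji ih =>
      have h1 := ih (by omega)
      have h2 := recB (i+1) (by omega) (by omega)
      simp only [Nat.add_sub_cancel] at h2
      rw [Finset.sum_Ico_succ_top (by omega)]
      have e : B (i+1) - B j = (B i - B j) + (((u (i+1)).length:ℤ) - ((v (i+1)).length:ℤ)) := by
        rw [h2]; ring
      have habs : |B (i+1) - B j| ≤ |B i - B j| + (((u (i+1)).length:ℤ) + ((v (i+1)).length:ℤ)) := by
        rw [e]
        refine (abs_add_le _ _).trans ?_
        have : |((u (i+1)).length:ℤ) - ((v (i+1)).length:ℤ)| ≤ ((u (i+1)).length:ℤ) + ((v (i+1)).length:ℤ) := by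
          have h0u := Int.natCast_nonneg (u (i+1)).length
          have h0v := Int.natCast_nonneg (v (i+1)).length
          rw [abs_sub_le_iff]
          constructor <;> linarith
        linarith
      linarith
  -- sum bounds
  have sumU : ∀ j i, i ≤ k →
      (∑ l ∈ Finset.Ico j i, ((u (l+1)).length:ℤ)) ≤ (∑ l ∈ Finset.Icc 1 k, ((u l).length:ℤ)) := by
    intro j i hik
    have e : (∑ l ∈ Finset.Icc 1 k, ((u l).length:ℤ)) = ∑ l ∈ Finset.range k, ((u (l+1)).length:ℤ) := by
      rw [← Finset.Ico_add_one_right_eq_Icc, Finset.sum_Ico_eq_sum_range]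
      simp [add_comm]
    rw [e]
    apply Finset.sum_le_sum_of_subset_of_nonneg
    · intro x hx
      simp only [Finset.mem_Ico, Finset.mem_range] at *
      omega
    · intro x _ _; positivity
  have sumV0 : ∀ j i, i ≤ k →
      (∑ l ∈ Finset.Ico j i, ((v l).length:ℤ)) ≤ (∑ l ∈ Finset.range (k+1), ((v l).length:ℤ)) := by
    intro j i hik
    apply Finset.sum_le_sum_of_subset_of_nonneg
    · intro x hx
      simp only [Finset.mem_Ico, Finset.mem_range] at *
      omega
    · intro x _ _; positivity
  have sumV1 : ∀ j i, i ≤ k →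
      (∑ l ∈ Finset.Ico j i, ((v (l+1)).length:ℤ)) ≤ (∑ l ∈ Finset.range (k+1), ((v l).length:ℤ)) := by
    intro j i hik
    have e : (∑ l ∈ Finset.Ico j i, ((v (l+1)).length:ℤ)) = ∑ l ∈ Finset.Ico (j+1) (i+1), ((v l).length:ℤ) := by
      rw [Finset.sum_Ico_eq_sum_range, Finset.sum_Ico_eq_sum_range]
      simp [add_comm, add_assoc, add_left_comm]
    rw [e]
    apply Finset.sum_le_sum_of_subset_of_nonneg
    · intro x hx
      simp only [Finset.mem_Ico, Finset.mem_range] at *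
      omega
    · intro x _ _; positivity
  have boundA : ∀ j i, j ≤ i → i ≤ k → |A i - A j| ≤ L := by
    intro j i hji hik
    refine (keyA j i hji hik).trans ?_
    rw [Finset.sum_add_distrib, hL]
    exact add_le_add (sumU j i hik) (sumV0 j i hik)
  have boundB : ∀ j i, j ≤ i → i ≤ k → |B i - B j| ≤ L := by
    intro j i hji hik
    refine (keyB j i hji hik).trans ?_
    rw [Finset.sum_add_distrib, hL]
    exact add_le_add (sumU j i hik) (sumV1 j i hik)
  have boundA' : ∀ i j, i ≤ k → j ≤ k → |A i - A j| ≤ L := by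
    intro i j hi hj
    rcases le_total j i with h | h
    · exact boundA j i h hi
    · rw [abs_sub_comm]; exact boundA i j h hj
  have boundB' : ∀ i j, i ≤ k → j ≤ k → |B i - B j| ≤ L := by
    intro i j hi hj
    rcases le_total j i with h | h
    · exact boundB j i h hi
    · rw [abs_sub_comm]; exact boundB i j h hj
  constructor
  · intro i j hi hj hie hje
    have ei : i = 2 * (i / 2) := by omega
    have ej : j = 2 * (j / 2) := by omega
    rw [ei, ej]
    exact boundA' (i/2) (j/2) (by omega) (by omega)
  · intro i j hi1 hi hj1 hj hio hjo
    have ei : i = 2 * ((i-1) / 2) + 1 := by omega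
    have ej : j = 2 * ((j-1) / 2) + 1 := by omega
    rw [ei, ej]
    exact boundB' ((i-1)/2) ((j-1)/2) (by omega) (by omega)
end
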